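/- (Error decomposition of the multilinear perturbation.) Let G, G* ∈ ℝ^{r₁×r₂×T₀}, U_i, U_i* ∈ ℝ^{N×r_i} with U_i*ᵀU_i* = b²I_{r_i}, and R_i ∈ ℝ^{r_i×r_i} orthogonal, for i = 1,2. Define A = G×₁U₁×₂U₂, A* = G*×₁U₁*×₂U₂*, A_G = (G − G*×₁R₁ᵀ×₂R₂ᵀ)×₁U₁×₂U₂, A_{U₁} = G×₁(U₁ − U₁*R₁)×₂U₂, and A_{U₂} = G×₁U₁×₂(U₂ − U₂*R₂). Suppose ‖U_i‖_op ≤ (1+c_e)σ_U^{1/4}, ‖G_{(i)}‖_op ≤ (1+c_e)σ_U^{1/2}, and there is B ≥ 0 with ‖G − G*×₁R₁ᵀ×₂R₂ᵀ‖_F ≤ B and ‖U_i − U_i*R_i‖_F ≤ B for i = 1,2. Then the residual H = A_G + A_{U₁} + A_{U₂} − (A − A*) satisfies ‖H‖_F ≤ [(1+c_e)σ_U^{1/2} + (2+c_e)σ_U^{1/4}]·B². -/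

import Mathlib

open Matrix

/-- Frobenius norm of a real matrix. -/
noncomputable def frob {m n : Type*} [Fintype m] [Fintype n] (M : Matrix m n ℝ) : ℝ :=
  Real.sqrt (∑ i, ∑ j, (M i j) ^ 2)

/-- Operator (spectral) norm of a real matrix, via its action between Euclidean spaces. -/
noncomputable def opNorm {m n : Type*} [Fintype m] [Fintype n] [DecidableEq m] [DecidableEq n]
    (A : Matrix m n ℝ) : ℝ :=
  ‖LinearMap.toContinuousLinearMap (Matrix.toEuclideanLin A)‖

/-- Mode-1 matricization of a third-order tensor given by its frontal slices. -/
def mat1 {r₁ r₂ T₀ : ℕ} (G : Fin T₀ → Matrix (Fin r₁) (Fin r₂) ℝ) :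
    Matrix (Fin r₁) (Fin T₀ × Fin r₂) ℝ :=
  fun i jk => G jk.1 i jk.2

/-- Mode-2 matricization of a third-order tensor given by its frontal slices. -/
def mat2 {r₁ r₂ T₀ : ℕ} (G : Fin T₀ → Matrix (Fin r₁) (Fin r₂) ℝ) :
    Matrix (Fin r₂) (Fin T₀ × Fin r₁) ℝ :=
  fun i jk => G jk.1 jk.2 i

section Helpers

variable {m n p : Type*} [Fintype m] [Fintype n] [Fintype p]

lemma frob_nonneg (M : Matrix m n ℝ) : 0 ≤ frob M := Real.sqrt_nonneg _

lemma frob_sq (M : Matrix m n ℝ) : frob M ^ 2 = ∑ i, ∑ j, M i j ^ 2 :=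
  Real.sq_sqrt (by positivity)

lemma sqrt_le_of_sq_le' {s c : ℝ} (hc : 0 ≤ c) (h : s ≤ c ^ 2) : Real.sqrt s ≤ c := by
  calc Real.sqrt s ≤ Real.sqrt (c ^ 2) := Real.sqrt_le_sqrt h
  _ = c := Real.sqrt_sq hc

lemma opNorm_nonneg' [DecidableEq m] [DecidableEq n] (A : Matrix m n ℝ) : 0 ≤ opNorm A :=
  norm_nonneg _

lemma norm_equiv_symm_sq {k : Type*} [Fintype k] (y : k → ℝ) :
    ‖(WithLp.equiv 2 (k → ℝ)).symm y‖ ^ 2 = ∑ i, y i ^ 2 := by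
  rw [EuclideanSpace.norm_eq, Real.sq_sqrt (by positivity)]
  simp [Real.norm_eq_abs, sq_abs]

lemma frob_eq_norm (M : Matrix m n ℝ) :
    frob M = ‖(WithLp.equiv 2 (m × n → ℝ)).symm (fun q => M q.1 q.2)‖ := by
  rw [EuclideanSpace.norm_eq]
  simp [frob, Fintype.sum_prod_type, Real.norm_eq_abs, sq_abs]

lemma frob_add_le (A B : Matrix m n ℝ) : frob (A + B) ≤ frob A + frob B := by
  rw [frob_eq_norm, frob_eq_norm, frob_eq_norm]
  have : ((WithLp.equiv 2 (m × n → ℝ)).symm (fun q => (A + B) q.1 q.2)) =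
      (WithLp.equiv 2 (m × n → ℝ)).symm (fun q => A q.1 q.2)
        + (WithLp.equiv 2 (m × n → ℝ)).symm (fun q => B q.1 q.2) := rfl
  rw [this]; exact norm_add_le _ _

lemma toEuclideanLin_apply_equiv_symm' {m n : Type*} [Fintype m] [Fintype n] [DecidableEq n]
    (A : Matrix m n ℝ) (x : n → ℝ) :
    Matrix.toEuclideanLin A ((WithLp.equiv 2 (n → ℝ)).symm x) =
      (WithLp.equiv 2 (m → ℝ)).symm (A *ᵥ x) := rfl

lemma mulVec_sq_le [DecidableEq m] [DecidableEq n] (A : Matrix m n ℝ) (x : n → ℝ) :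
    ∑ i, (A *ᵥ x) i ^ 2 ≤ opNorm A ^ 2 * ∑ k, x k ^ 2 := by
  have h := (LinearMap.toContinuousLinearMap (Matrix.toEuclideanLin A)).le_opNorm
    ((WithLp.equiv 2 (n → ℝ)).symm x)
  rw [LinearMap.coe_toContinuousLinearMap'] at h
  rw [toEuclideanLin_apply_equiv_symm'] at h
  have h2 : ‖(WithLp.equiv 2 (m → ℝ)).symm (A *ᵥ x)‖ ^ 2 ≤
      (opNorm A * ‖(WithLp.equiv 2 (n → ℝ)).symm x‖) ^ 2 := by
    apply sq_le_sq' _ h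
    have := norm_nonneg ((WithLp.equiv 2 (m → ℝ)).symm (A *ᵥ x))
    nlinarith [mul_nonneg (opNorm_nonneg' A) (norm_nonneg ((WithLp.equiv 2 (n → ℝ)).symm x))]
  rw [norm_equiv_symm_sq (A *ᵥ x)] at h2
  rw [mul_pow] at h2
  rw [norm_equiv_symm_sq x] at h2
  exact h2

lemma frob_mul_le_op_left [DecidableEq m] [DecidableEq n]
    (A : Matrix m n ℝ) (M : Matrix n p ℝ) : frob (A * M) ≤ opNorm A * frob M := by
  apply sqrt_le_of_sq_le' (mul_nonneg (opNorm_nonneg' A) (frob_nonneg M))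
  rw [mul_pow, frob_sq]
  calc ∑ i, ∑ j, (A * M) i j ^ 2 = ∑ j, ∑ i, (A *ᵥ (fun k => M k j)) i ^ 2 := by
        rw [Finset.sum_comm]
        simp [Matrix.mul_apply, Matrix.mulVec, dotProduct]
    _ ≤ ∑ j : p, opNorm A ^ 2 * ∑ k, M k j ^ 2 := by
        exact Finset.sum_le_sum fun j _ => mulVec_sq_le A _
    _ = opNorm A ^ 2 * ∑ i, ∑ j, M i j ^ 2 := by
        rw [← Finset.mul_sum]
        congr 1
        exact Finset.sum_comm

lemma frob_transpose (M : Matrix m n ℝ) : frob Mᵀ = frob M := by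
  unfold frob
  rw [Finset.sum_comm]
  rfl

open scoped Matrix.Norms.L2Operator in
lemma opNorm_eq_norm [DecidableEq m] [DecidableEq n]
    (A : Matrix m n ℝ) : opNorm A = ‖A‖ := by
  rw [Matrix.l2_opNorm_def, LinearEquiv.trans_apply]; rfl

open scoped Matrix.Norms.L2Operator in
lemma opNorm_transpose [DecidableEq m] [DecidableEq n]
    (A : Matrix m n ℝ) : opNorm Aᵀ = opNorm A := by
  rw [opNorm_eq_norm, opNorm_eq_norm, ← Matrix.conjTranspose_eq_transpose_of_trivial,
    Matrix.l2_opNorm_conjTranspose]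

lemma frob_mul_le_op_right [DecidableEq n] [DecidableEq p]
    (M : Matrix m n ℝ) (A : Matrix n p ℝ) : frob (M * A) ≤ frob M * opNorm A := by
  have h : frob (M * A) = frob ((M * A)ᵀ) := (frob_transpose _).symm
  rw [h, Matrix.transpose_mul]
  calc frob (Aᵀ * Mᵀ) ≤ opNorm Aᵀ * frob Mᵀ := frob_mul_le_op_left _ _
    _ = frob M * opNorm A := by rw [opNorm_transpose, frob_transpose]; ring

lemma opNorm_le_frob [DecidableEq m] [DecidableEq n] (A : Matrix m n ℝ) :
    opNorm A ≤ frob A := by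
  apply ContinuousLinearMap.opNorm_le_bound _ (frob_nonneg A)
  intro x
  set y : n → ℝ := (WithLp.equiv 2 (n → ℝ)) x with hy
  have hx : x = (WithLp.equiv 2 (n → ℝ)).symm y := rfl
  rw [LinearMap.coe_toContinuousLinearMap']
  rw [hx, toEuclideanLin_apply_equiv_symm']
  have h1 : ‖(WithLp.equiv 2 (m → ℝ)).symm (A *ᵥ y)‖ =
      Real.sqrt (∑ i, (A *ᵥ y) i ^ 2) := by
    rw [← norm_equiv_symm_sq (A *ᵥ y), Real.sqrt_sq (norm_nonneg _)]
  rw [h1]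
  apply sqrt_le_of_sq_le' (mul_nonneg (frob_nonneg A) (norm_nonneg x))
  calc ∑ i, (A *ᵥ y) i ^ 2 ≤ ∑ i, (∑ k, A i k ^ 2) * ∑ k, y k ^ 2 :=
        Finset.sum_le_sum fun i _ => Finset.sum_mul_sq_le_sq_mul_sq _ _ _
    _ = (∑ i, ∑ k, A i k ^ 2) * ∑ k, y k ^ 2 := by rw [Finset.sum_mul]
    _ = (frob A * ‖x‖) ^ 2 := by
        rw [mul_pow, frob_sq, hx, norm_equiv_symm_sq]

lemma opNorm_le_of_orth [DecidableEq m] [DecidableEq n] (V : Matrix m n ℝ) (b : ℝ)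
    (hb : 0 ≤ b) (hV : Vᵀ * V = (b ^ 2) • (1 : Matrix n n ℝ)) : opNorm V ≤ b := by
  apply ContinuousLinearMap.opNorm_le_bound _ hb
  intro x
  set y : n → ℝ := (WithLp.equiv 2 (n → ℝ)) x with hy
  have hx : x = (WithLp.equiv 2 (n → ℝ)).symm y := rfl
  rw [LinearMap.coe_toContinuousLinearMap']
  rw [hx, toEuclideanLin_apply_equiv_symm']
  have key : ∑ i, (V *ᵥ y) i ^ 2 = b ^ 2 * ∑ k, y k ^ 2 := by
    have h1 : ∑ i, (V *ᵥ y) i ^ 2 = (V *ᵥ y) ⬝ᵥ (V *ᵥ y) := by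
      simp [dotProduct, sq]
    have h2 : (V *ᵥ y) ⬝ᵥ (V *ᵥ y) = ((Vᵀ * V) *ᵥ y) ⬝ᵥ y := by
      rw [dotProduct_mulVec, ← Matrix.mulVec_transpose, Matrix.mulVec_mulVec]
    rw [h1, h2, hV, Matrix.smul_mulVec, Matrix.one_mulVec, smul_dotProduct]
    simp [dotProduct, sq, smul_eq_mul]
  have h1 : ‖(WithLp.equiv 2 (m → ℝ)).symm (V *ᵥ y)‖ =
      Real.sqrt (∑ i, (V *ᵥ y) i ^ 2) := by
    rw [← norm_equiv_symm_sq (V *ᵥ y), Real.sqrt_sq (norm_nonneg _)]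
  rw [h1, key]
  apply sqrt_le_of_sq_le' (mul_nonneg hb (norm_nonneg x))
  rw [mul_pow, hx, norm_equiv_symm_sq]

end Helpers

section Mat

variable {N r₁ r₂ T₀ : ℕ}

lemma triple_swap {α β γ : Type*} [Fintype α] [Fintype β] [Fintype γ]
    (f : α → β → γ → ℝ) :
    ∑ i : β, ∑ j : α, ∑ k : γ, f j i k = ∑ k : γ, ∑ j : α, ∑ i : β, f j i k := by
  calc ∑ i : β, ∑ j : α, ∑ k : γ, f j i k
      = ∑ i : β, ∑ k : γ, ∑ j : α, f j i k :=
        Finset.sum_congr rfl fun i _ => Finset.sum_comm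
    _ = ∑ k : γ, ∑ i : β, ∑ j : α, f j i k := Finset.sum_comm
    _ = ∑ k : γ, ∑ j : α, ∑ i : β, f j i k :=
        Finset.sum_congr rfl fun k _ => Finset.sum_comm

lemma frob_mat1 (M : Fin T₀ → Matrix (Fin r₁) (Fin r₂) ℝ) :
    frob (mat1 M) = Real.sqrt (∑ j, frob (M j) ^ 2) := by
  have h : ∀ j, frob (M j) ^ 2 = ∑ i, ∑ k, M j i k ^ 2 := fun j => frob_sq _
  simp only [h]
  unfold frob mat1
  congr 1
  simp only [Fintype.sum_prod_type]
  exact Finset.sum_comm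

lemma frob_mat2 (M : Fin T₀ → Matrix (Fin r₁) (Fin r₂) ℝ) :
    frob (mat2 M) = Real.sqrt (∑ j, frob (M j) ^ 2) := by
  have h : ∀ j, frob (M j) ^ 2 = ∑ i, ∑ k, M j i k ^ 2 := fun j => frob_sq _
  simp only [h]
  unfold frob mat2
  congr 1
  simp only [Fintype.sum_prod_type]
  calc ∑ i : Fin r₂, ∑ j : Fin T₀, ∑ k : Fin r₁, M j k i ^ 2
      = ∑ k : Fin r₁, ∑ j : Fin T₀, ∑ i : Fin r₂, M j k i ^ 2 :=
        triple_swap fun j i k => M j k i ^ 2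
    _ = ∑ j : Fin T₀, ∑ k : Fin r₁, ∑ i : Fin r₂, M j k i ^ 2 := Finset.sum_comm

lemma mat1_mul_left (A : Matrix (Fin N) (Fin r₁) ℝ)
    (M : Fin T₀ → Matrix (Fin r₁) (Fin r₂) ℝ) :
    mat1 (fun j => A * M j) = A * mat1 M := by
  ext i jk
  simp [mat1, Matrix.mul_apply]

lemma frob_mat1_swap (M : Fin T₀ → Matrix (Fin r₁) (Fin r₂) ℝ)
    (A : Matrix (Fin N) (Fin r₂) ℝ) :
    frob (mat1 (fun j => M j * Aᵀ)) = frob (A * mat2 M) := by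
  unfold frob mat1 mat2
  congr 1
  simp only [Matrix.mul_apply, Matrix.transpose_apply, Fintype.sum_prod_type]
  calc ∑ i : Fin r₁, ∑ j : Fin T₀, ∑ nn : Fin N, (∑ l, M j i l * A nn l) ^ 2
      = ∑ nn : Fin N, ∑ j : Fin T₀, ∑ i : Fin r₁, (∑ l, M j i l * A nn l) ^ 2 :=
        triple_swap fun j i nn => (∑ l, M j i l * A nn l) ^ 2
    _ = ∑ nn : Fin N, ∑ j : Fin T₀, ∑ i : Fin r₁, (∑ l, A nn l * M j i l) ^ 2 := by
        simp [mul_comm]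

end Mat

section Decomp

variable {N r₁ r₂ : ℕ}

lemma slice_decomp (U₁ U₁s : Matrix (Fin N) (Fin r₁) ℝ) (U₂ U₂s : Matrix (Fin N) (Fin r₂) ℝ)
    (R₁ : Matrix (Fin r₁) (Fin r₁) ℝ) (R₂ : Matrix (Fin r₂) (Fin r₂) ℝ)
    (Gj Gsj : Matrix (Fin r₁) (Fin r₂) ℝ)
    (h1 : R₁ * R₁ᵀ = 1) (h2 : R₂ * R₂ᵀ = 1) :
    U₁ * (Gj - R₁ᵀ * Gsj * R₂) * U₂ᵀ
      + (U₁ - U₁s * R₁) * Gj * U₂ᵀ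
      + U₁ * Gj * (U₂ - U₂s * R₂)ᵀ
      - (U₁ * Gj * U₂ᵀ - U₁s * Gsj * U₂sᵀ)
    = (U₁ - U₁s * R₁) * ((Gj - R₁ᵀ * Gsj * R₂) * U₂ᵀ)
      + (U₁s * R₁) * ((Gj - R₁ᵀ * Gsj * R₂) * (U₂ - U₂s * R₂)ᵀ)
      + (U₁ - U₁s * R₁) * (Gj * (U₂ - U₂s * R₂)ᵀ) := by
  have e1 : ∀ (X : Matrix (Fin r₁) (Fin N) ℝ), R₁ * (R₁ᵀ * X) = X := fun X => by
    rw [← Matrix.mul_assoc, h1, Matrix.one_mul]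
  have e2 : ∀ (X : Matrix (Fin r₂) (Fin N) ℝ), R₂ * (R₂ᵀ * X) = X := fun X => by
    rw [← Matrix.mul_assoc, h2, Matrix.one_mul]
  have hstar : U₁s * Gsj * U₂sᵀ = (U₁s * R₁) * ((R₁ᵀ * Gsj * R₂) * (U₂s * R₂)ᵀ) := by
    simp only [Matrix.transpose_mul, Matrix.mul_assoc, e1, e2]
  rw [hstar]
  simp only [Matrix.transpose_sub, Matrix.transpose_mul, Matrix.mul_sub, Matrix.sub_mul,
    Matrix.mul_add, Matrix.add_mul, Matrix.mul_assoc]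
  abel

end Decomp

/-- Error decomposition of the multilinear perturbation (Lemma B.9): the residual
`H = A_G + A_{U₁} + A_{U₂} − (A − A*)` of the first-order expansion of the Tucker map
satisfies `‖H‖_F ≤ [(1+c_e)σ_U^{1/2} + (2+c_e)σ_U^{1/4}]·B²`, where the frontal slices
of the tensors involved are `A_j = U₁ G_j U₂ᵀ`, `A*_j = U₁* G*_j U₂*ᵀ`,
`(A_G)_j = U₁(G_j − R₁ᵀ G*_j R₂)U₂ᵀ`, `(A_{U₁})_j = (U₁ − U₁*R₁) G_j U₂ᵀ`,
`(A_{U₂})_j = U₁ G_j (U₂ − U₂*R₂)ᵀ`. -/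
theorem perturbation_residual_bound {N r₁ r₂ T₀ : ℕ}
    (G Gstar : Fin T₀ → Matrix (Fin r₁) (Fin r₂) ℝ)
    (U₁ U₁s : Matrix (Fin N) (Fin r₁) ℝ) (U₂ U₂s : Matrix (Fin N) (Fin r₂) ℝ)
    (R₁ : Matrix (Fin r₁) (Fin r₁) ℝ) (R₂ : Matrix (Fin r₂) (Fin r₂) ℝ)
    (b ce σU B : ℝ) (hb : 0 < b) (hce : 0 < ce) (hσ : 0 < σU) (hB : 0 ≤ B)
    (hU1s : U₁sᵀ * U₁s = (b ^ 2) • (1 : Matrix (Fin r₁) (Fin r₁) ℝ))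
    (hU2s : U₂sᵀ * U₂s = (b ^ 2) • (1 : Matrix (Fin r₂) (Fin r₂) ℝ))
    (hR1 : R₁ᵀ * R₁ = 1) (hR2 : R₂ᵀ * R₂ = 1)
    (hU1 : opNorm U₁ ≤ (1 + ce) * σU ^ ((1 : ℝ) / 4))
    (hU2 : opNorm U₂ ≤ (1 + ce) * σU ^ ((1 : ℝ) / 4))
    (hG1 : opNorm (mat1 G) ≤ (1 + ce) * σU ^ ((1 : ℝ) / 2))
    (hG2 : opNorm (mat2 G) ≤ (1 + ce) * σU ^ ((1 : ℝ) / 2))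
    (hb4 : b ≤ σU ^ ((1 : ℝ) / 4))
    (hGB : Real.sqrt (∑ j, (frob (G j - R₁ᵀ * Gstar j * R₂)) ^ 2) ≤ B)
    (hU1B : frob (U₁ - U₁s * R₁) ≤ B)
    (hU2B : frob (U₂ - U₂s * R₂) ≤ B) :
    Real.sqrt (∑ j, (frob
        (U₁ * (G j - R₁ᵀ * Gstar j * R₂) * U₂ᵀ
          + (U₁ - U₁s * R₁) * G j * U₂ᵀ
          + U₁ * G j * (U₂ - U₂s * R₂)ᵀ
          - (U₁ * G j * U₂ᵀ - U₁s * Gstar j * U₂sᵀ))) ^ 2) ≤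
      ((1 + ce) * σU ^ ((1 : ℝ) / 2) + (2 + ce) * σU ^ ((1 : ℝ) / 4)) * B ^ 2 := by
  have hR1' : R₁ * R₁ᵀ = 1 := mul_eq_one_comm.mp hR1
  have hR2' : R₂ * R₂ᵀ = 1 := mul_eq_one_comm.mp hR2
  set D₁ : Matrix (Fin N) (Fin r₁) ℝ := U₁ - U₁s * R₁ with hD₁
  set D₂ : Matrix (Fin N) (Fin r₂) ℝ := U₂ - U₂s * R₂ with hD₂
  set V₁ : Matrix (Fin N) (Fin r₁) ℝ := U₁s * R₁ with hV₁
  set E : Fin T₀ → Matrix (Fin r₁) (Fin r₂) ℝ := fun j => G j - R₁ᵀ * Gstar j * R₂ with hE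
  -- rewrite the residual slices
  have hdecomp : ∀ j,
      U₁ * (G j - R₁ᵀ * Gstar j * R₂) * U₂ᵀ
        + (U₁ - U₁s * R₁) * G j * U₂ᵀ
        + U₁ * G j * (U₂ - U₂s * R₂)ᵀ
        - (U₁ * G j * U₂ᵀ - U₁s * Gstar j * U₂sᵀ)
      = D₁ * (E j * U₂ᵀ) + V₁ * (E j * D₂ᵀ) + D₁ * (G j * D₂ᵀ) := by
    intro j
    have := slice_decomp U₁ U₁s U₂ U₂s R₁ R₂ (G j) (Gstar j) hR1' hR2'
    rw [this]
  -- express LHS as frobenius norm of a big matricization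
  have hL : Real.sqrt (∑ j, (frob
      (U₁ * (G j - R₁ᵀ * Gstar j * R₂) * U₂ᵀ
        + (U₁ - U₁s * R₁) * G j * U₂ᵀ
        + U₁ * G j * (U₂ - U₂s * R₂)ᵀ
        - (U₁ * G j * U₂ᵀ - U₁s * Gstar j * U₂sᵀ))) ^ 2)
      = frob (mat1 (fun j => D₁ * (E j * U₂ᵀ) + V₁ * (E j * D₂ᵀ) + D₁ * (G j * D₂ᵀ))) := by
    rw [frob_mat1]
    congr 1
    apply Finset.sum_congr rfl
    intro j _
    rw [hdecomp j]
  rw [hL]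
  -- split the sum
  have hsplit : mat1 (fun j => D₁ * (E j * U₂ᵀ) + V₁ * (E j * D₂ᵀ) + D₁ * (G j * D₂ᵀ))
      = mat1 (fun j => D₁ * (E j * U₂ᵀ)) + mat1 (fun j => V₁ * (E j * D₂ᵀ))
        + mat1 (fun j => D₁ * (G j * D₂ᵀ)) := by
    ext i jk
    simp [mat1]
  rw [hsplit]
  have htri : frob (mat1 (fun j => D₁ * (E j * U₂ᵀ)) + mat1 (fun j => V₁ * (E j * D₂ᵀ))
        + mat1 (fun j => D₁ * (G j * D₂ᵀ)))
      ≤ frob (mat1 (fun j => D₁ * (E j * U₂ᵀ))) + frob (mat1 (fun j => V₁ * (E j * D₂ᵀ)))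
        + frob (mat1 (fun j => D₁ * (G j * D₂ᵀ))) := by
    calc frob _ ≤ frob (mat1 (fun j => D₁ * (E j * U₂ᵀ)) + mat1 (fun j => V₁ * (E j * D₂ᵀ)))
          + frob (mat1 (fun j => D₁ * (G j * D₂ᵀ))) := frob_add_le _ _
      _ ≤ _ := by
          have := frob_add_le (mat1 (fun j => D₁ * (E j * U₂ᵀ)))
            (mat1 (fun j => V₁ * (E j * D₂ᵀ)))
          linarith
  refine le_trans htri ?_
  -- basic quantities
  have hσq : (0:ℝ) ≤ σU ^ ((1 : ℝ) / 4) := Real.rpow_nonneg hσ.le _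
  have hσh : (0:ℝ) ≤ σU ^ ((1 : ℝ) / 2) := Real.rpow_nonneg hσ.le _
  have hEc : frob (mat2 E) ≤ B := by
    rw [frob_mat2]
    exact hGB
  have hV₁op : opNorm V₁ ≤ σU ^ ((1 : ℝ) / 4) := by
    refine le_trans (opNorm_le_of_orth V₁ b hb.le ?_) hb4
    rw [hV₁, Matrix.transpose_mul, Matrix.mul_assoc, ← Matrix.mul_assoc U₁sᵀ, hU1s,
      Matrix.smul_mul, Matrix.one_mul, Matrix.mul_smul, hR1]
  have hD₁op : opNorm D₁ ≤ B := le_trans (opNorm_le_frob D₁) hU1B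
  have hD₂op : opNorm D₂ ≤ B := le_trans (opNorm_le_frob D₂) hU2B
  -- term 2 : D₁ * (E j * U₂ᵀ)
  have ht2 : frob (mat1 (fun j => D₁ * (E j * U₂ᵀ)))
      ≤ B * ((1 + ce) * σU ^ ((1 : ℝ) / 4) * B) := by
    rw [mat1_mul_left]
    calc frob (D₁ * mat1 (fun j => E j * U₂ᵀ))
        ≤ opNorm D₁ * frob (mat1 (fun j => E j * U₂ᵀ)) := frob_mul_le_op_left _ _
      _ ≤ B * ((1 + ce) * σU ^ ((1 : ℝ) / 4) * B) := by
          rw [frob_mat1_swap]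
          have h1 : frob (U₂ * mat2 E) ≤ opNorm U₂ * frob (mat2 E) := frob_mul_le_op_left _ _
          have h2 : opNorm U₂ * frob (mat2 E) ≤ (1 + ce) * σU ^ ((1 : ℝ) / 4) * B :=
            mul_le_mul hU2 hEc (frob_nonneg _) (by positivity)
          exact mul_le_mul hD₁op (le_trans h1 h2) (frob_nonneg _) hB
  -- term 3 : V₁ * (E j * D₂ᵀ)
  have ht3 : frob (mat1 (fun j => V₁ * (E j * D₂ᵀ)))
      ≤ σU ^ ((1 : ℝ) / 4) * (B * B) := by
    rw [mat1_mul_left]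
    calc frob (V₁ * mat1 (fun j => E j * D₂ᵀ))
        ≤ opNorm V₁ * frob (mat1 (fun j => E j * D₂ᵀ)) := frob_mul_le_op_left _ _
      _ ≤ σU ^ ((1 : ℝ) / 4) * (B * B) := by
          rw [frob_mat1_swap]
          have h1 : frob (D₂ * mat2 E) ≤ opNorm D₂ * frob (mat2 E) := frob_mul_le_op_left _ _
          have h2 : opNorm D₂ * frob (mat2 E) ≤ B * B :=
            mul_le_mul hD₂op hEc (frob_nonneg _) hB
          exact mul_le_mul hV₁op (le_trans h1 h2) (frob_nonneg _) hσq
  -- term 1 : D₁ * (G j * D₂ᵀ)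
  have ht1 : frob (mat1 (fun j => D₁ * (G j * D₂ᵀ)))
      ≤ B * (B * ((1 + ce) * σU ^ ((1 : ℝ) / 2))) := by
    rw [mat1_mul_left]
    calc frob (D₁ * mat1 (fun j => G j * D₂ᵀ))
        ≤ opNorm D₁ * frob (mat1 (fun j => G j * D₂ᵀ)) := frob_mul_le_op_left _ _
      _ ≤ B * (B * ((1 + ce) * σU ^ ((1 : ℝ) / 2))) := by
          rw [frob_mat1_swap]
          have h1 : frob (D₂ * mat2 G) ≤ frob D₂ * opNorm (mat2 G) := frob_mul_le_op_right _ _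
          have h2 : frob D₂ * opNorm (mat2 G) ≤ B * ((1 + ce) * σU ^ ((1 : ℝ) / 2)) :=
            mul_le_mul hU2B hG2 (opNorm_nonneg' _) hB
          exact mul_le_mul hD₁op (le_trans h1 h2) (frob_nonneg _) hB
  have hfin : B * ((1 + ce) * σU ^ ((1 : ℝ) / 4) * B) + σU ^ ((1 : ℝ) / 4) * (B * B)
      + B * (B * ((1 + ce) * σU ^ ((1 : ℝ) / 2)))
      = ((1 + ce) * σU ^ ((1 : ℝ) / 2) + (2 + ce) * σU ^ ((1 : ℝ) / 4)) * B ^ 2 := by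
    ring
  linarith
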